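/- arXiv:math/0110111 — 3 statements merged into one kernel-verified Lean document; each statement's English description precedes it below -/
import Mathlib

section
/- Fix real numbers f_i, f_{i+1}, d_i, d_{i+1} and h > 0. Set S = (f_{i+1} − f_i)/h, P = (S − d_i)h, Q = (d_{i+1} − S)h, and for k ∈ ℝ let D(k) = Q + (P − Q)k. For a weight α ∈ [0,1] the hybrid-cubic-rational interpolant is F_α(k) = f_i + d_i h k + (α P²/D(k) + (1 − α)(2P − D(k))) k², defined wherever D(k) ≠ 0. If P > 0 and Q > 0, then the pure rational interpolant F_1 satisfies F_1''(k) = 2P²Q²/D(k)³ > 0 for all k ∈ [0,1]; in particular F_1 is strictly convex on [0,1], so the rational interpolation function preserves the convexity of concave data. -/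
/-- For concave data (`P > 0`, `Q > 0`) the pure rational interpolant `F₁`
    has second derivative `2P²Q²/D(k)³ > 0` on `[0,1]`; in particular it is
    strictly convex on `[0,1]`, so the rational interpolation function
    preserves the convexity of concave data. -/
theorem rational_interpolant_convexity_preserving
    (fi fi1 di di1 h : ℝ) (hh : 0 < h)
    (S P Q : ℝ)
    (hS : S = (fi1 - fi) / h) (hP : P = (S - di) * h) (hQ : Q = (di1 - S) * h)
    (D : ℝ → ℝ) (hD : ∀ k, D k = Q + (P - Q) * k)
    (F : ℝ → ℝ → ℝ)
    (hF : ∀ α k, F α k =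
      fi + di * h * k + (α * P ^ 2 / D k + (1 - α) * (2 * P - D k)) * k ^ 2)
    (hPpos : 0 < P) (hQpos : 0 < Q) :
    (∀ k ∈ Set.Icc (0 : ℝ) 1,
      deriv (deriv (F 1)) k = 2 * P ^ 2 * Q ^ 2 / D k ^ 3 ∧
        0 < 2 * P ^ 2 * Q ^ 2 / D k ^ 3) ∧
    StrictConvexOn ℝ (Set.Icc (0 : ℝ) 1) (F 1) := by
  -- rewrite F 1 into a concrete form
  have hF1 : F 1 = fun k => fi + di * h * k + P ^ 2 * k ^ 2 / (Q + (P - Q) * k) := by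
    funext k
    rw [hF, hD]
    ring
  set U : Set ℝ := {x | 0 < Q + (P - Q) * x} with hU
  have hUopen : IsOpen U := by
    have : Continuous fun x : ℝ => Q + (P - Q) * x := by continuity
    exact isOpen_lt continuous_const this
  have hsub : Set.Icc (0 : ℝ) 1 ⊆ U := by
    intro x hx
    simp only [Set.mem_Icc] at hx
    simp only [hU, Set.mem_setOf_eq]
    nlinarith [mul_nonneg (sub_nonneg.2 (min_le_left P Q)) hx.1,
      mul_nonneg (sub_nonneg.2 (min_le_right P Q)) (sub_nonneg.2 hx.2),
      lt_min hPpos hQpos]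
  -- first derivative
  set g1 : ℝ → ℝ := fun x =>
    di * h + (2 * P ^ 2 * x * (Q + (P - Q) * x) - P ^ 2 * x ^ 2 * (P - Q)) /
      (Q + (P - Q) * x) ^ 2 with hg1
  have hDne : ∀ x ∈ U, (Q + (P - Q) * x) ≠ 0 := fun x hx => ne_of_gt hx
  have hder1 : ∀ x ∈ U, HasDerivAt (F 1) (g1 x) x := by
    intro x hx
    rw [hF1]
    have hnum : HasDerivAt (fun k : ℝ => P ^ 2 * k ^ 2) (2 * P ^ 2 * x) x := by
      have := (hasDerivAt_pow 2 x).const_mul (P ^ 2)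
      simpa using this.congr_deriv (by ring)
    have hden : HasDerivAt (fun k : ℝ => Q + (P - Q) * k) (P - Q) x := by
      have := ((hasDerivAt_id x).const_mul (P - Q)).const_add Q
      simpa using this
    have hdiv := hnum.div hden (hDne x hx)
    have hlin : HasDerivAt (fun k : ℝ => fi + di * h * k) (di * h) x := by
      have := ((hasDerivAt_id x).const_mul (di * h)).const_add fi
      simpa using this
    have := hlin.add hdiv
    apply this.congr_deriv
    rw [hg1]
  -- second derivative
  have hder2 : ∀ x ∈ U, HasDerivAt g1
      (2 * P ^ 2 * Q ^ 2 / (Q + (P - Q) * x) ^ 3) x := by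
    intro x hx
    have hden : HasDerivAt (fun k : ℝ => Q + (P - Q) * k) (P - Q) x := by
      have := ((hasDerivAt_id x).const_mul (P - Q)).const_add Q
      simpa using this
    have hnum : HasDerivAt
        (fun k : ℝ => 2 * P ^ 2 * k * (Q + (P - Q) * k) - P ^ 2 * k ^ 2 * (P - Q))
        (2 * P ^ 2 * (Q + (P - Q) * x) + 2 * P ^ 2 * x * (P - Q)
          - 2 * P ^ 2 * x * (P - Q)) x := by
      have h1 : HasDerivAt (fun k : ℝ => 2 * P ^ 2 * k) (2 * P ^ 2) x := by
        simpa using (hasDerivAt_id x).const_mul (2 * P ^ 2)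
      have h2 := h1.mul hden
      have h3 : HasDerivAt (fun k : ℝ => P ^ 2 * k ^ 2 * (P - Q)) (2 * P ^ 2 * x * (P - Q)) x := by
        have := ((hasDerivAt_pow 2 x).const_mul (P ^ 2)).mul_const (P - Q)
        simpa using this.congr_deriv (by ring)
      have := h2.sub h3
      apply this.congr_deriv
      ring
    have hdensq : HasDerivAt (fun k : ℝ => (Q + (P - Q) * k) ^ 2)
        (2 * (Q + (P - Q) * x) * (P - Q)) x := by
      have := hden.pow 2
      exact this.congr_deriv (by ring)
    have hne2 : ((Q + (P - Q) * x) ^ 2) ≠ 0 := pow_ne_zero 2 (hDne x hx)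
    have hdiv := hnum.div hdensq hne2
    have := hdiv.const_add (di * h)
    apply this.congr_deriv
    have hx0 : (0 : ℝ) < Q + (P - Q) * x := hx
    field_simp
    ring
  -- deriv (F 1) agrees with g1 on U
  have hd1eq : ∀ x ∈ U, deriv (F 1) x = g1 x := fun x hx => (hder1 x hx).deriv
  have hderivderiv : ∀ x ∈ U,
      deriv (deriv (F 1)) x = 2 * P ^ 2 * Q ^ 2 / (Q + (P - Q) * x) ^ 3 := by
    intro x hx
    have hev : deriv (F 1) =ᶠ[nhds x] g1 := by
      filter_upwards [hUopen.mem_nhds hx] with y hy using hd1eq y hy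
    rw [hev.deriv_eq]
    exact (hder2 x hx).deriv
  constructor
  · intro k hk
    have hkU := hsub hk
    have hDk : D k = Q + (P - Q) * k := hD k
    have hDkpos : 0 < Q + (P - Q) * k := hkU
    refine ⟨by rw [hDk]; exact hderivderiv k hkU, ?_⟩
    rw [hDk]
    positivity
  · apply strictConvexOn_of_deriv2_pos (convex_Icc 0 1)
    · intro x hx
      exact ((hder1 x (hsub hx)).differentiableAt).continuousAt.continuousWithinAt
    · intro x hx
      rw [interior_Icc] at hx
      have hxU : x ∈ U := hsub (Set.mem_Icc_of_Ioo hx)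
      have := hderivderiv x hxU
      simp only [Function.iterate_succ, Function.iterate_zero, Function.comp_apply, id_eq]
      rw [show deriv (deriv (F 1)) x = 2 * P ^ 2 * Q ^ 2 / (Q + (P - Q) * x) ^ 3 from this]
      have : (0:ℝ) < Q + (P - Q) * x := hxU
      positivity
end

section
/- Fix real numbers f_i, f_{i+1}, d_i, d_{i+1} and h > 0. Set S = (f_{i+1} − f_i)/h, P = (S − d_i)h, Q = (d_{i+1} − S)h, and for k ∈ ℝ let D(k) = Q + (P − Q)k. For a weight α ∈ [0,1] the hybrid-cubic-rational interpolant is F_α(k) = f_i + d_i h k + (α P²/D(k) + (1 − α)(2P − D(k))) k², defined wherever D(k) ≠ 0. Suppose P > 0 and Q > 0, and set M = max(2, max(Q/P, P/Q)) and α* = M(M−2)/(M(M−2)+1). Then for all k ∈ [0,1], 2α*P²Q²/D(k)³ + 2(1 − α*)·((2P − Q) − 3(P − Q)k) ≥ 0; i.e., the second derivative of F_{α*} is nonnegative throughout [0,1], so the hybrid interpolant with the theoretically determined mixing ratio α* preserves the convexity of concave data. -/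
set_option maxHeartbeats 1600000 in
/-- With the theoretically determined mixing ratio
    `α* = M(M−2)/(M(M−2)+1)`, `M = max(2, max(Q/P, P/Q))`, the second
    derivative of the hybrid-cubic-rational interpolant is nonnegative
    throughout the cell for concave data: the hybrid interpolant preserves
    the convexity. -/
theorem hcr_optimal_alpha_convexity_preserving
    (P Q : ℝ) (hP : 0 < P) (hQ : 0 < Q)
    (M : ℝ) (hM : M = max 2 (max (Q / P) (P / Q)))
    (αs : ℝ) (hα : αs = M * (M - 2) / (M * (M - 2) + 1))
    (D : ℝ → ℝ) (hD : ∀ k, D k = Q + (P - Q) * k) :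
    ∀ k ∈ Set.Icc (0 : ℝ) 1,
      0 ≤ 2 * αs * P ^ 2 * Q ^ 2 / D k ^ 3 +
        2 * (1 - αs) * ((2 * P - Q) - 3 * (P - Q) * k) := by
  intro k hk
  obtain ⟨hk0, hk1⟩ := hk
  rw [hD]
  set a := min P Q with ha_def
  set b := max P Q with hb_def
  have haP : a ≤ P := min_le_left _ _
  have haQ : a ≤ Q := min_le_right _ _
  have hPb : P ≤ b := le_max_left _ _
  have hQb : Q ≤ b := le_max_right _ _
  have ha : 0 < a := lt_min hP hQ
  have hb : 0 < b := lt_of_lt_of_le ha (min_le_max)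
  have hab : a * b = P * Q := min_mul_max P Q
  have hab2 : P ^ 2 * Q ^ 2 = a ^ 2 * b ^ 2 := by
    have : P ^ 2 * Q ^ 2 = (P * Q) ^ 2 := by ring
    rw [this, ← hab]; ring
  clear_value a b
  have hM2 : (2:ℝ) ≤ M := by rw [hM]; exact le_max_left _ _
  have hMQP : Q / P ≤ M := by
    rw [hM]; exact le_trans (le_max_left _ _) (le_max_right _ _)
  have hMPQ : P / Q ≤ M := by
    rw [hM]; exact le_trans (le_max_right _ _) (le_max_right _ _)
  have hbMa : b ≤ M * a := by
    rcases le_total P Q with h | h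
    · have hb' : b = Q := by rw [hb_def]; exact max_eq_right h
      have ha' : a = P := by rw [ha_def]; exact min_eq_left h
      rw [hb', ha']
      have := (div_le_iff₀ hP).mp hMQP
      linarith
    · have hb' : b = P := by rw [hb_def]; exact max_eq_left h
      have ha' : a = Q := by rw [ha_def]; exact min_eq_right h
      rw [hb', ha']
      have := (div_le_iff₀ hQ).mp hMPQ
      linarith
  set t := M * (M - 2) with ht
  have ht0 : 0 ≤ t := by rw [ht]; nlinarith
  clear_value t
  have ht1 : (0:ℝ) < t + 1 := by linarith
  have hα0 : 0 ≤ αs := by rw [hα]; exact div_nonneg ht0 ht1.le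
  have hα1 : 1 - αs = 1 / (t + 1) := by
    rw [hα]; field_simp; ring
  have hα1' : 0 < 1 - αs := by rw [hα1]; positivity
  have hkey : αs = (1 - αs) * t := by
    rw [hα1, hα]; field_simp
  -- bounds on D k
  have hDpos : 0 < Q + (P - Q) * k := by
    nlinarith [mul_nonneg (sub_nonneg.2 haQ) (sub_nonneg.2 hk1),
      mul_nonneg (sub_nonneg.2 haP) hk0]
  have hDle : Q + (P - Q) * k ≤ b := by
    nlinarith [mul_nonneg (sub_nonneg.2 hQb) (sub_nonneg.2 hk1),
      mul_nonneg (sub_nonneg.2 hPb) hk0]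
  have hDb : (Q + (P - Q) * k) ^ 3 ≤ b ^ 3 := by
    exact pow_le_pow_left₀ hDpos.le hDle 3
  -- the key polynomial inequality
  have hpoly : 0 ≤ t * a ^ 2 + (2 * a - b) * b := by
    nlinarith [mul_nonneg (sub_nonneg.2 hbMa)
        (sub_nonneg.2 (le_trans haP hPb : a ≤ b)),
      sq_nonneg (M * a - b)]
  have hfinal : 0 ≤ 2 * αs * a ^ 2 / b + 2 * (1 - αs) * (2 * a - b) := by
    rw [div_add' _ _ _ hb.ne']
    apply div_nonneg _ hb.le
    have hs : 2 * αs * a ^ 2 = 2 * ((1 - αs) * t) * a ^ 2 := by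
      linear_combination (2 * a ^ 2) * hkey
    nlinarith [mul_nonneg hα1'.le hpoly, hs]
  -- bound the rational term
  have hT1 : 2 * αs * a ^ 2 / b ≤ 2 * αs * P ^ 2 * Q ^ 2 / (Q + (P - Q) * k) ^ 3 := by
    have h1 : 2 * αs * P ^ 2 * Q ^ 2 = 2 * αs * (a ^ 2 * b ^ 2) := by
      linear_combination (2 * αs) * hab2
    rw [h1, div_le_div_iff₀ hb (by positivity)]
    nlinarith [mul_le_mul_of_nonneg_left hDb
      (show (0:ℝ) ≤ 2 * αs * a ^ 2 by positivity)]
  -- bound the linear term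
  have hg : 2 * a - b ≤ (2 * P - Q) - 3 * (P - Q) * k := by
    nlinarith [mul_nonneg (sub_nonneg.2 hk1)
        (show (0:ℝ) ≤ 2 * P - Q - (2 * a - b) by linarith),
      mul_nonneg hk0
        (show (0:ℝ) ≤ 2 * Q - P - (2 * a - b) by linarith)]
  have hT2 : 2 * (1 - αs) * (2 * a - b)
      ≤ 2 * (1 - αs) * ((2 * P - Q) - 3 * (P - Q) * k) :=
    mul_le_mul_of_nonneg_left hg (by positivity)
  linarith
end

section
/- Fix real numbers P > 0 and Q > 0 with max(P/Q, Q/P) > 2, and for k ∈ ℝ let D(k) = Q + (P − Q)k. Set M = max(P/Q, Q/P) and α* = M(M−2)/(M(M−2)+1). Then for every β ∈ [0, α*) there exists k ∈ [0,1] (one may take k = 1 if P > 2Q and k = 0 if Q > 2P) such that 2βP²Q²/D(k)³ + 2(1 − β)·((2P − Q) − 3(P − Q)k) < 0; i.e., α* is the minimum of the mixing ratios for which the hybrid-cubic-rational interpolant satisfies the convexity-preserving condition. -/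
/-- Minimality of the optimal mixing ratio: when `max(P/Q, Q/P) > 2`, any
    mixing ratio `β` strictly below `α* = M(M−2)/(M(M−2)+1)` fails the
    convexity-preserving condition at some point of the cell (one may take
    `k = 1` if `P > 2Q` and `k = 0` if `Q > 2P`). -/
theorem hcr_optimal_alpha_minimal
    (P Q : ℝ) (hP : 0 < P) (hQ : 0 < Q)
    (hbig : 2 < max (P / Q) (Q / P))
    (M : ℝ) (hM : M = max (P / Q) (Q / P))
    (αs : ℝ) (hα : αs = M * (M - 2) / (M * (M - 2) + 1))
    (D : ℝ → ℝ) (hD : ∀ k, D k = Q + (P - Q) * k) :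
    ∀ β ∈ Set.Ico (0 : ℝ) αs, ∃ k ∈ Set.Icc (0 : ℝ) 1,
      ((2 * Q < P → k = 1) ∧ (2 * P < Q → k = 0)) ∧
      2 * β * P ^ 2 * Q ^ 2 / D k ^ 3 +
        2 * (1 - β) * ((2 * P - Q) - 3 * (P - Q) * k) < 0 := by
  intro β hβ
  obtain ⟨hβ0, hβs⟩ := hβ
  rcases lt_max_iff.mp hbig with h | h
  · -- case P/Q > 2, take k = 1
    have hPQ : 2 * Q < P := by
      rw [lt_div_iff₀ hQ] at h; linarith
    have hQP : Q / P < P / Q := by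
      rw [div_lt_div_iff₀ hP hQ]; nlinarith
    have hM' : M = P / Q := by rw [hM, max_eq_left hQP.le]
    have hM2 : 2 < M := by rw [hM']; exact h
    have hden : 0 < M * (M - 2) + 1 := by nlinarith
    have hkey : β * (M * (M - 2) + 1) < M * (M - 2) := by
      rw [hα, lt_div_iff₀ hden] at hβs; exact hβs
    have hkey2 : β * Q ^ 2 < (1 - β) * (P - 2 * Q) * P := by
      rw [hM'] at hkey
      have hQ' := hQ.ne'
      field_simp at hkey
      have h2 := hkey
      nlinarith [h2]
    refine ⟨1, ⟨by norm_num, le_refl 1⟩, ⟨fun _ => rfl, fun h2 => absurd h2 (by linarith)⟩, ?_⟩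
    rw [hD]
    have hD1 : Q + (P - Q) * 1 = P := by ring
    rw [hD1]
    rw [div_add' _ _ _ (ne_of_gt (pow_pos hP 3))]
    apply div_neg_of_neg_of_pos _ (pow_pos hP 3)
    nlinarith [hkey2, pow_pos hP 3, mul_pos (mul_pos hP hP) hP]
  · -- case Q/P > 2, take k = 0
    have hPQ : 2 * P < Q := by
      rw [lt_div_iff₀ hP] at h; linarith
    have hQP : P / Q < Q / P := by
      rw [div_lt_div_iff₀ hQ hP]; nlinarith
    have hM' : M = Q / P := by rw [hM, max_eq_right hQP.le]
    have hM2 : 2 < M := by rw [hM']; exact h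
    have hden : 0 < M * (M - 2) + 1 := by nlinarith
    have hkey : β * (M * (M - 2) + 1) < M * (M - 2) := by
      rw [hα, lt_div_iff₀ hden] at hβs; exact hβs
    have hkey2 : β * P ^ 2 < (1 - β) * (Q - 2 * P) * Q := by
      rw [hM'] at hkey
      have hP' := hP.ne'
      field_simp at hkey
      have h2 := hkey
      nlinarith [h2]
    refine ⟨0, ⟨le_refl 0, by norm_num⟩, ⟨fun h2 => absurd h2 (by linarith), fun _ => rfl⟩, ?_⟩
    rw [hD]
    have hD0 : Q + (P - Q) * 0 = Q := by ring
    rw [hD0]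
    rw [div_add' _ _ _ (ne_of_gt (pow_pos hQ 3))]
    apply div_neg_of_neg_of_pos _ (pow_pos hQ 3)
    nlinarith [hkey2, pow_pos hQ 3, mul_pos (mul_pos hQ hQ) hQ]
end
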